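/- Let I be a monomial ideal of A with M(I) finite, and let a, b ∈ M(I) be vertices that are not reachable from one another in G(I), each of which lies in a nontrivial or quasi-trivially connected component, i.e. each of a and b either is adjacent to some vertex of G(I), or equals e_t for some t with X_t^2 ∉ I. Say that a variable i is involved in the component of a vertex v if X_i·X^{v'} ∉ I for some vertex v' reachable from v in G(I). Then no variable is involved in both the component of a and the component of b: the two components have no variables in common. -/

import Mathlib

open MvPolynomial

/-- An ideal of `k[X_1,…,X_n]` is a *monomial ideal* if it is generated by a set
of monomials. -/
def IsMonomialIdeal {k : Type*} [Field k] {n : ℕ}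
    (I : Ideal (MvPolynomial (Fin n) k)) : Prop :=
  ∃ S : Set ((Fin n) →₀ ℕ),
    I = Ideal.span ((fun a => (monomial a (1 : k) : MvPolynomial (Fin n) k)) '' S)

/-- `M(I)`: the vertices of the survival complex of `A/I`. -/
def survivors {k : Type*} [Field k] {n : ℕ}
    (I : Ideal (MvPolynomial (Fin n) k)) : Set ((Fin n) →₀ ℕ) :=
  {a | a ≠ 0 ∧ monomial a (1 : k) ∉ I}

/-- The survival graph `G(I)`: distinct vertices `a, b ∈ M(I)` are adjacent iff
`X^{a+b} ∉ I` (the 1-skeleton of the survival complex). -/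
def survGraph {k : Type*} [Field k] {n : ℕ}
    (I : Ideal (MvPolynomial (Fin n) k)) : SimpleGraph ((Fin n) →₀ ℕ) where
  Adj a b := a ≠ b ∧ a ∈ survivors I ∧ b ∈ survivors I ∧ monomial (a + b) (1 : k) ∉ I
  symm := by
    constructor
    rintro a b ⟨h1, h2, h3, h4⟩
    exact ⟨h1.symm, h3, h2, by rwa [add_comm]⟩
  loopless := by
    constructor
    rintro a ⟨h1, -⟩
    exact h1 rfl

/-- Variable `i` is involved in the connected component of the vertex `v`:
`X_i · X^{v'} ∉ I` for some vertex `v'` reachable from `v` in `G(I)`. -/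
def InvolvedIn {k : Type*} [Field k] {n : ℕ}
    (I : Ideal (MvPolynomial (Fin n) k)) (i : Fin n) (v : (Fin n) →₀ ℕ) : Prop :=
  ∃ v' ∈ survivors I, (survGraph I).Reachable v v' ∧
    X i * monomial v' (1 : k) ∉ I

/-- Two distinct nontrivial or quasi-trivially connected components of the
survival complex have no variables in common. -/
theorem components_share_no_variables
    {k : Type*} [Field k] {n : ℕ} (hn : 1 ≤ n)
    (I : Ideal (MvPolynomial (Fin n) k)) (hI : IsMonomialIdeal I)
    (hfin : (survivors I).Finite)
    (a b : (Fin n) →₀ ℕ) (ha : a ∈ survivors I) (hb : b ∈ survivors I)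
    (hsep : ¬ (survGraph I).Reachable a b)
    (hanontriv : (∃ v, (survGraph I).Adj a v) ∨
      ∃ t : Fin n, a = Finsupp.single t 1 ∧
        monomial (Finsupp.single t 2) (1 : k) ∉ I)
    (hbnontriv : (∃ v, (survGraph I).Adj b v) ∨
      ∃ t : Fin n, b = Finsupp.single t 1 ∧
        monomial (Finsupp.single t 2) (1 : k) ∉ I) :
    ¬ ∃ i : Fin n, InvolvedIn I i a ∧ InvolvedIn I i b := by
  rintro ⟨i, ⟨a', ha', hra, hai⟩, ⟨b', hb', hrb, hbi⟩⟩
  have hmul : ∀ v : (Fin n) →₀ ℕ,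
      X i * monomial v (1 : k) = monomial (v + Finsupp.single i 1) (1 : k) := by
    intro v
    rw [X, monomial_mul, one_mul, add_comm]
  have hei : (Finsupp.single i 1 : (Fin n) →₀ ℕ) ∈ survivors I := by
    refine ⟨by simp, fun h => hai ?_⟩
    rw [hmul]
    have : monomial a' (1 : k) * monomial (Finsupp.single i 1) (1 : k) ∈ I :=
      Ideal.mul_mem_left _ _ h
    rwa [monomial_mul, one_mul] at this
  have key : ∀ v' ∈ survivors I, X i * monomial v' (1 : k) ∉ I →
      (survGraph I).Reachable v' (Finsupp.single i 1) := by
    intro v' hv' hni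
    by_cases hv : v' = Finsupp.single i 1
    · exact hv ▸ SimpleGraph.Reachable.refl _
    · exact SimpleGraph.Adj.reachable ⟨hv, hv', hei, by rw [← hmul]; exact hni⟩
  exact hsep ((hra.trans (key a' ha' hai)).trans ((key b' hb' hbi).symm.trans hrb.symm))
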